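/- Let $E$ be a real Hilbert space and let $C_1, C_2 \subseteq E$ be nonempty closed convex sets. Let $N_{C_i}$ denote the normal cone operator of $C_i$ (i.e. $N_{C_i}(x) = \{v : \langle v, y - x\rangle \leq 0 \ \forall y \in C_i\}$ for $x \in C_i$, empty otherwise). Then the Vladimirov pseudo-distance satisfies $dis(N_{C_1}, N_{C_2}) = d_H(C_1, C_2)$, the Hausdorff distance between $C_1$ and $C_2$. -/

import Mathlib

open scoped RealInnerProductSpace ENNReal

variable {E : Type*} [NormedAddCommGroup E] [InnerProductSpace ℝ E]

/-- The Vladimirov pseudo-distance between two set-valued operators. -/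
noncomputable def vdis (A B : E → Set E) : EReal :=
  ⨆ (x : E) (y : E) (_ : y ∈ A x) (x' : E) (y' : E) (_ : y' ∈ B x'),
    ((⟪y - y', x' - x⟫ / (1 + ‖y‖ + ‖y'‖) : ℝ) : EReal)

/-- The normal cone operator of a set `C`. -/
def normalCone (C : Set E) (x : E) : Set E :=
  {v : E | x ∈ C ∧ ∀ y ∈ C, ⟪v, y - x⟫ ≤ 0}

/-- Projection onto a nonempty closed convex set. -/
lemma exists_proj [CompleteSpace E] {C : Set E} (hne : C.Nonempty) (hc : IsClosed C)
    (hv : Convex ℝ C) (u : E) :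
    ∃ v ∈ C, ‖u - v‖ = Metric.infDist u C ∧ ∀ w ∈ C, ⟪u - v, w - v⟫ ≤ 0 := by
  obtain ⟨v, hvC, hmin⟩ := exists_norm_eq_iInf_of_complete_convex hne hc.isComplete hv u
  have hiInf : (⨅ w : C, ‖u - w‖) = Metric.infDist u C := by
    rw [Metric.infDist_eq_iInf]; simp_rw [dist_eq_norm]
  exact ⟨v, hvC, hmin.trans hiInf, (norm_eq_iInf_iff_real_inner_le_zero hv hvC).1 hmin⟩

lemma zero_mem_normalCone {C : Set E} {x : E} (hx : x ∈ C) : (0 : E) ∈ normalCone C x :=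
  ⟨hx, fun w _ => by simp [inner_zero_left]⟩

lemma vdis_normalCone_nonneg (C₁ C₂ : Set E) (h₁ : C₁.Nonempty) (h₂ : C₂.Nonempty) :
    (0 : EReal) ≤ vdis (normalCone C₁) (normalCone C₂) := by
  obtain ⟨x₁, hx₁⟩ := h₁
  obtain ⟨x₂, hx₂⟩ := h₂
  have h0 : (0 : EReal) = ((⟪(0:E) - 0, x₂ - x₁⟫ / (1 + ‖(0:E)‖ + ‖(0:E)‖) : ℝ) : EReal) := by
    norm_num
  rw [h0, vdis]
  apply le_iSup_of_le x₁
  apply le_iSup_of_le (0 : E)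
  apply le_iSup_of_le (zero_mem_normalCone hx₁)
  apply le_iSup_of_le x₂
  apply le_iSup_of_le (0 : E)
  exact le_iSup_of_le (zero_mem_normalCone hx₂) le_rfl

section side

variable [CompleteSpace E] {C₁ C₂ : Set E}

/-- Auxiliary: choice of the scaling parameter. -/
lemma aux_t {r d : ℝ} (hr0 : 0 ≤ r) (hrd : r < d) :
    0 < r / (d * (d - r)) + 1 ∧
      r * (1 + (r / (d * (d - r)) + 1) * d) < (r / (d * (d - r)) + 1) * (d * d) := by
  have hd0 : 0 < d := lt_of_le_of_lt hr0 hrd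
  have hdr : 0 < d - r := sub_pos.2 hrd
  have hdd : 0 < d * (d - r) := mul_pos hd0 hdr
  have ht0 : 0 < r / (d * (d - r)) + 1 := by positivity
  refine ⟨ht0, ?_⟩
  have hkey : (r / (d * (d - r)) + 1) * (d * (d - r)) = r + d * (d - r) := by
    field_simp
  nlinarith [hkey, hdd]

/-- One-sided lower bound: a point of `C₂` far from `C₁` produces a large `vdis` term. -/
lemma lt_vdis_of_lt_infDist_right (h₁ : C₁.Nonempty)
    (hc₁ : IsClosed C₁) (hv₁ : Convex ℝ C₁) {u : E} (hu : u ∈ C₂) {r : ℝ}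
    (hr0 : 0 ≤ r) (hr : r < Metric.infDist u C₁) :
    ((r : ℝ) : EReal) < vdis (normalCone C₁) (normalCone C₂) := by
  obtain ⟨v, hvC, hnorm, hproj⟩ := exists_proj h₁ hc₁ hv₁ u
  set d : ℝ := Metric.infDist u C₁ with hd
  set t : ℝ := r / (d * (d - r)) + 1 with htdef
  obtain ⟨ht0, hval⟩ := aux_t hr0 hr
  rw [← htdef] at ht0 hval
  have hy : t • (u - v) ∈ normalCone C₁ v :=
    ⟨hvC, fun w hw => by
      rw [real_inner_smul_left]
      exact mul_nonpos_of_nonneg_of_nonpos ht0.le (hproj w hw)⟩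
  have h0 : (0 : E) ∈ normalCone C₂ u := zero_mem_normalCone hu
  have hinner : ⟪t • (u - v) - (0:E), u - v⟫ = t * (d * d) := by
    rw [sub_zero, real_inner_smul_left, real_inner_self_eq_norm_mul_norm, hnorm]
  have hynorm : ‖t • (u - v)‖ = t * d := by
    rw [norm_smul, Real.norm_eq_abs, abs_of_pos ht0, hnorm]
  have hdenpos : 0 < 1 + t * d := by
    have hd0 : 0 < d := lt_of_le_of_lt hr0 hr
    positivity
  have hq : r < t * (d * d) / (1 + t * d) := (lt_div_iff₀ hdenpos).2 (by linarith [hval])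
  calc ((r : ℝ) : EReal) < ((t * (d * d) / (1 + t * d) : ℝ) : EReal) :=
        EReal.coe_lt_coe_iff.2 hq
    _ ≤ vdis (normalCone C₁) (normalCone C₂) := by
        rw [vdis]
        apply le_iSup_of_le v
        apply le_iSup_of_le (t • (u - v))
        apply le_iSup_of_le hy
        apply le_iSup_of_le u
        apply le_iSup_of_le (0 : E)
        apply le_iSup_of_le h0
        apply le_of_eq
        congr 1
        rw [hinner, hynorm, norm_zero, add_zero]

/-- One-sided lower bound: a point of `C₁` far from `C₂` produces a large `vdis` term. -/
lemma lt_vdis_of_lt_infDist_left (h₂ : C₂.Nonempty)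
    (hc₂ : IsClosed C₂) (hv₂ : Convex ℝ C₂) {u : E} (hu : u ∈ C₁) {r : ℝ}
    (hr0 : 0 ≤ r) (hr : r < Metric.infDist u C₂) :
    ((r : ℝ) : EReal) < vdis (normalCone C₁) (normalCone C₂) := by
  obtain ⟨v, hvC, hnorm, hproj⟩ := exists_proj h₂ hc₂ hv₂ u
  set d : ℝ := Metric.infDist u C₂ with hd
  set t : ℝ := r / (d * (d - r)) + 1 with htdef
  obtain ⟨ht0, hval⟩ := aux_t hr0 hr
  rw [← htdef] at ht0 hval
  have hy : t • (u - v) ∈ normalCone C₂ v :=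
    ⟨hvC, fun w hw => by
      rw [real_inner_smul_left]
      exact mul_nonpos_of_nonneg_of_nonpos ht0.le (hproj w hw)⟩
  have h0 : (0 : E) ∈ normalCone C₁ u := zero_mem_normalCone hu
  have hinner : ⟪(0:E) - t • (u - v), v - u⟫ = t * (d * d) := by
    rw [zero_sub, show v - u = -(u - v) by abel, inner_neg_neg, real_inner_smul_left,
      real_inner_self_eq_norm_mul_norm, hnorm]
  have hynorm : ‖t • (u - v)‖ = t * d := by
    rw [norm_smul, Real.norm_eq_abs, abs_of_pos ht0, hnorm]
  have hdenpos : 0 < 1 + t * d := by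
    have hd0 : 0 < d := lt_of_le_of_lt hr0 hr
    positivity
  have hq : r < t * (d * d) / (1 + t * d) := (lt_div_iff₀ hdenpos).2 (by linarith [hval])
  calc ((r : ℝ) : EReal) < ((t * (d * d) / (1 + t * d) : ℝ) : EReal) :=
        EReal.coe_lt_coe_iff.2 hq
    _ ≤ vdis (normalCone C₁) (normalCone C₂) := by
        rw [vdis]
        apply le_iSup_of_le u
        apply le_iSup_of_le (0 : E)
        apply le_iSup_of_le h0
        apply le_iSup_of_le v
        apply le_iSup_of_le (t • (u - v))
        apply le_iSup_of_le hy
        apply le_of_eq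
        congr 1
        rw [hinner, hynorm, norm_zero]
        ring_nf

end side

/-- For closed convex sets, the Vladimirov pseudo-distance between the normal cone
operators equals the Hausdorff distance between the sets. -/
theorem vdis_normalCone_eq_hausdorff [CompleteSpace E]
    (C₁ C₂ : Set E) (h₁ : C₁.Nonempty) (h₂ : C₂.Nonempty)
    (hc₁ : IsClosed C₁) (hc₂ : IsClosed C₂)
    (hv₁ : Convex ℝ C₁) (hv₂ : Convex ℝ C₂) :
    vdis (normalCone C₁) (normalCone C₂) =
      ((EMetric.hausdorffEdist C₁ C₂ : ℝ≥0∞) : EReal) := by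
  set H : ℝ≥0∞ := EMetric.hausdorffEdist C₁ C₂ with hHdef
  refine le_antisymm ?_ ?_
  · -- vdis ≤ H
    rcases eq_or_ne H ⊤ with hH | hH
    · rw [hH, EReal.coe_ennreal_top]; exact le_top
    · refine iSup_le fun x => iSup_le fun y => iSup_le fun hy => iSup_le fun x' =>
        iSup_le fun y' => iSup_le fun hy' => ?_
      set D : ℝ := Metric.hausdorffDist C₁ C₂ with hDdef
      have hD0 : 0 ≤ D := Metric.hausdorffDist_nonneg
      have hfin' : EMetric.hausdorffEdist C₂ C₁ ≠ ⊤ := by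
        show Metric.hausdorffEDist C₂ C₁ ≠ ⊤; rwa [Metric.hausdorffEDist_comm]
      obtain ⟨p, hpC, hpnorm, -⟩ := exists_proj h₁ hc₁ hv₁ x'
      obtain ⟨q, hqC, hqnorm, -⟩ := exists_proj h₂ hc₂ hv₂ x
      have h1 : ⟪y, x' - x⟫ ≤ ‖y‖ * D := by
        have e1 : ⟪y, x' - x⟫ = ⟪y, x' - p⟫ + ⟪y, p - x⟫ := by
          rw [← inner_add_right, sub_add_sub_cancel]
        have e2 : ⟪y, x' - p⟫ ≤ ‖y‖ * ‖x' - p‖ := real_inner_le_norm y (x' - p)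
        have e3 : ⟪y, p - x⟫ ≤ 0 := hy.2 p hpC
        have e4 : ‖x' - p‖ ≤ D := by
          rw [hpnorm]
          calc Metric.infDist x' C₁ ≤ Metric.hausdorffDist C₂ C₁ :=
                Metric.infDist_le_hausdorffDist_of_mem hy'.1 hfin'
            _ = D := Metric.hausdorffDist_comm
        have := mul_le_mul_of_nonneg_left e4 (norm_nonneg y)
        linarith
      have h2 : ⟪y', x - x'⟫ ≤ ‖y'‖ * D := by
        have e1 : ⟪y', x - x'⟫ = ⟪y', x - q⟫ + ⟪y', q - x'⟫ := by
          rw [← inner_add_right, sub_add_sub_cancel]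
        have e2 : ⟪y', x - q⟫ ≤ ‖y'‖ * ‖x - q‖ := real_inner_le_norm y' (x - q)
        have e3 : ⟪y', q - x'⟫ ≤ 0 := hy'.2 q hqC
        have e4 : ‖x - q‖ ≤ D := by
          rw [hqnorm]
          exact Metric.infDist_le_hausdorffDist_of_mem hy.1 hH
        have := mul_le_mul_of_nonneg_left e4 (norm_nonneg y')
        linarith
      have hnum : ⟪y - y', x' - x⟫ ≤ (1 + ‖y‖ + ‖y'‖) * D := by
        have e : ⟪y - y', x' - x⟫ = ⟪y, x' - x⟫ + ⟪y', x - x'⟫ := by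
          rw [inner_sub_left, show x - x' = -(x' - x) by abel, inner_neg_right]
          ring
        nlinarith [norm_nonneg y, norm_nonneg y']
      have hden : (0:ℝ) < 1 + ‖y‖ + ‖y'‖ := by positivity
      have hreal : ⟪y - y', x' - x⟫ / (1 + ‖y‖ + ‖y'‖) ≤ D :=
        (div_le_iff₀ hden).2 (by linarith [hnum])
      have hcast : ((D : ℝ) : EReal) = (H : EReal) := by
        have h1 : ((H : EReal)).toReal = D := by
          rw [EReal.toReal_coe_ennreal]; rfl
        rw [← h1]
        exact EReal.coe_toReal (by simp [hH]) (EReal.coe_ennreal_ne_bot H)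
      calc ((⟪y - y', x' - x⟫ / (1 + ‖y‖ + ‖y'‖) : ℝ) : EReal) ≤ ((D : ℝ) : EReal) :=
            EReal.coe_le_coe_iff.2 hreal
        _ = (H : EReal) := hcast
  · -- H ≤ vdis
    apply le_of_forall_lt
    intro c hc
    induction c using EReal.rec with
    | bot =>
        exact lt_of_lt_of_le (EReal.bot_lt_coe_ennreal 0)
          (le_trans (by simp) (vdis_normalCone_nonneg C₁ C₂ h₁ h₂))
    | top => exact absurd hc (not_top_lt)
    | coe r =>
        rcases lt_or_ge r 0 with hr0 | hr0
        · calc ((r : ℝ) : EReal) < ((0 : ℝ) : EReal) := EReal.coe_lt_coe_iff.2 hr0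
            _ ≤ vdis (normalCone C₁) (normalCone C₂) := by
                rw [EReal.coe_zero]; exact vdis_normalCone_nonneg C₁ C₂ h₁ h₂
        · have hnle : ¬ H ≤ ENNReal.ofReal r := by
            intro hle
            have : (H : EReal) ≤ ((ENNReal.ofReal r : ℝ≥0∞) : EReal) :=
              EReal.coe_ennreal_le_coe_ennreal_iff.2 hle
            rw [EReal.coe_ennreal_ofReal, max_eq_left hr0] at this
            exact absurd hc (not_lt.2 this)
          have key : (∃ u ∈ C₁, r < Metric.infDist u C₂) ∨
              (∃ u ∈ C₂, r < Metric.infDist u C₁) := by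
            by_contra hcon
            push_neg at hcon
            obtain ⟨hA, hB⟩ := hcon
            refine hnle (EMetric.hausdorffEdist_le_of_infEdist ?_ ?_)
            · intro x hx
              exact (ENNReal.le_ofReal_iff_toReal_le
                (Metric.infEdist_ne_top h₂) hr0).2 (hA x hx)
            · intro x hx
              exact (ENNReal.le_ofReal_iff_toReal_le
                (Metric.infEdist_ne_top h₁) hr0).2 (hB x hx)
          rcases key with ⟨u, hu, hru⟩ | ⟨u, hu, hru⟩
          · exact lt_vdis_of_lt_infDist_left h₂ hc₂ hv₂ hu hr0 hru
          · exact lt_vdis_of_lt_infDist_right h₁ hc₁ hv₁ hu hr0 hru
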